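/- Let A be an abelian category with enough injectives, let B be an abelian category, and let S*, T* : A → B be two cohomological δ-functors satisfying S^i = T^i = 0 for all negative i. Then a morphism of δ-functors φ : S* → T* is an isomorphism if and only if φ_A : S*(A) → T*(A) is an isomorphism for every injective object A of A. -/

import Mathlib

/-!
# Statement 17

Let `A` be an abelian category with enough injectives, `B` an abelian category, and
`S^*, T^* : A → B` two cohomological δ-functors with `S^i = T^i = 0` for negative `i`.
A morphism of δ-functors `φ : S^* → T^*` is an isomorphism if and only if `φ_A` is an
isomorphism for every injective object `A` of `A`.
-/

open CategoryTheory Limits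

universe w v u u'

lemma exact₃_mk {C : Type*} [Category C] [Abelian C] {X₀ X₁ X₂ X₃ : C}
    (f : X₀ ⟶ X₁) (g : X₁ ⟶ X₂) (h : X₂ ⟶ X₃)
    (w₁ : f ≫ g = 0) (w₂ : g ≫ h = 0)
    (e₁ : (ShortComplex.mk f g w₁).Exact) (e₂ : (ShortComplex.mk g h w₂).Exact) :
    (ComposableArrows.mk₃ f g h).Exact := by
  apply ComposableArrows.exact_of_δ₀
  · exact e₁.exact_toComposableArrows
  · exact e₂.exact_toComposableArrows

/-- A cohomological δ-functor from `A` to `B`: a sequence of additive functors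
`F i : A ⥤ B` (`i ∈ ℤ`) with connecting morphisms `δ : F i (X₃) ⟶ F (i+1) (X₁)` for
every short exact sequence `0 → X₁ → X₂ → X₃ → 0`, natural in the short exact sequence,
such that the induced long sequence is exact. -/
structure DeltaFunctor (A : Type u) (B : Type u') [Category.{v} A] [Category.{w} B]
    [Abelian A] [Abelian B] where
  /-- the component functors -/
  F : ℤ → A ⥤ B
  additive : ∀ i, (F i).Additive
  /-- the connecting morphisms -/
  δ : ∀ (S : ShortComplex A), S.ShortExact → ∀ i : ℤ, (F i).obj S.X₃ ⟶ (F (i + 1)).obj S.X₁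
  /-- naturality of the connecting morphisms with respect to morphisms of short exact
  sequences -/
  δ_natural : ∀ (S T : ShortComplex A) (hS : S.ShortExact) (hT : T.ShortExact)
      (f : S ⟶ T) (i : ℤ),
      (F i).map f.τ₃ ≫ δ T hT i = δ S hS i ≫ (F (i + 1)).map f.τ₁
  map_comp_zero : ∀ (S : ShortComplex A), S.ShortExact → ∀ i : ℤ,
      (F i).map S.f ≫ (F i).map S.g = 0
  comp_δ_zero : ∀ (S : ShortComplex A) (hS : S.ShortExact) (i : ℤ),
      (F i).map S.g ≫ δ S hS i = 0
  δ_comp_zero : ∀ (S : ShortComplex A) (hS : S.ShortExact) (i : ℤ),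
      δ S hS i ≫ (F (i + 1)).map S.f = 0
  /-- exactness of the long sequence at `F i (X₂)` -/
  exact₂ : ∀ (S : ShortComplex A) (hS : S.ShortExact) (i : ℤ),
      (ShortComplex.mk ((F i).map S.f) ((F i).map S.g) (map_comp_zero S hS i)).Exact
  /-- exactness of the long sequence at `F i (X₃)` -/
  exact₃ : ∀ (S : ShortComplex A) (hS : S.ShortExact) (i : ℤ),
      (ShortComplex.mk ((F i).map S.g) (δ S hS i) (comp_δ_zero S hS i)).Exact
  /-- exactness of the long sequence at `F (i+1) (X₁)` -/
  exact₁ : ∀ (S : ShortComplex A) (hS : S.ShortExact) (i : ℤ),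
      (ShortComplex.mk (δ S hS i) ((F (i + 1)).map S.f) (δ_comp_zero S hS i)).Exact

/-- A morphism of δ-functors: a collection of natural transformations commuting with
the connecting morphisms. -/
structure DeltaFunctorHom {A : Type u} {B : Type u'} [Category.{v} A] [Category.{w} B]
    [Abelian A] [Abelian B] (S T : DeltaFunctor A B) where
  /-- the component natural transformations -/
  app : ∀ i : ℤ, S.F i ⟶ T.F i
  /-- compatibility with the connecting morphisms -/
  comm : ∀ (C : ShortComplex A) (hC : C.ShortExact) (i : ℤ),
      S.δ C hC i ≫ (app (i + 1)).app C.X₁ = (app i).app C.X₃ ≫ T.δ C hC i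

/-- A morphism of cohomological δ-functors vanishing in negative degrees, over an
abelian category with enough injectives, is an isomorphism if and only if it is an
isomorphism on all injective objects. -/
theorem deltaFunctor_isIso_iff_isIso_on_injectives
    {A : Type u} {B : Type u'} [Category.{v} A] [Category.{w} B]
    [Abelian A] [Abelian B] [EnoughInjectives A]
    (S T : DeltaFunctor A B)
    (hS : ∀ i < (0 : ℤ), ∀ X : A, IsZero ((S.F i).obj X))
    (hT : ∀ i < (0 : ℤ), ∀ X : A, IsZero ((T.F i).obj X))
    (φ : DeltaFunctorHom S T) :
    (∀ (i : ℤ) (X : A), IsIso ((φ.app i).app X)) ↔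
      (∀ (i : ℤ) (X : A), Injective X → IsIso ((φ.app i).app X)) := by
  
  constructor
  · intro h i X _; exact h i X
  intro hinj
  -- negative degrees: zero objects
  have hneg : ∀ i < (0 : ℤ), ∀ X : A, IsIso ((φ.app i).app X) := by
    intro i hi X
    refine ⟨0, (hS i hi X).eq_of_src _ _, (hT i hi X).eq_of_src _ _⟩
  -- the inductive step
  have step : ∀ i : ℤ, (∀ X : A, IsIso ((φ.app i).app X)) →
      ∀ X : A, IsIso ((φ.app (i + 1)).app X) := by
    intro i IH
    have hmono : ∀ X : A, Mono ((φ.app (i + 1)).app X) := by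
      intro X
      set f : X ⟶ Injective.under X := Injective.ι X with hf
      set C : ShortComplex A := ShortComplex.mk f (cokernel.π f) (cokernel.condition f) with hCdef
      have hC : C.ShortExact :=
        { exact := ShortComplex.exact_of_g_is_cokernel _ (cokernelIsCokernel f)
          mono_f := by dsimp [C]; infer_instance
          epi_g := by dsimp [C]; infer_instance }
      let R₁ := ComposableArrows.mk₃ ((S.F i).map C.g) (S.δ C hC i) ((S.F (i+1)).map C.f)
      let R₂ := ComposableArrows.mk₃ ((T.F i).map C.g) (T.δ C hC i) ((T.F (i+1)).map C.f)
      let ψ : R₁ ⟶ R₂ := ComposableArrows.homMk₃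
        ((φ.app i).app C.X₂) ((φ.app i).app C.X₃)
        ((φ.app (i+1)).app C.X₁) ((φ.app (i+1)).app C.X₂)
        ((φ.app i).naturality C.g)
        (φ.comm C hC i)
        ((φ.app (i+1)).naturality C.f)
      have hR₁ : R₁.Exact := exact₃_mk _ _ _ _ _ (S.exact₃ C hC i) (S.exact₁ C hC i)
      have hR₂ : R₂.Exact := exact₃_mk _ _ _ _ _ (T.exact₃ C hC i) (T.exact₁ C hC i)
      have : Mono (ComposableArrows.app' ψ 2) := by
        apply Abelian.mono_of_epi_of_mono_of_mono ψ hR₁ hR₂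
        · have := IH C.X₂; dsimp [ψ]; exact (inferInstanceAs (Epi ((φ.app i).app C.X₂)))
        · have := IH C.X₃; dsimp [ψ]; exact (inferInstanceAs (Mono ((φ.app i).app C.X₃)))
        · have := hinj (i+1) C.X₂ (by dsimp [C]; infer_instance); dsimp [ψ]; exact (inferInstanceAs (Mono ((φ.app (i+1)).app C.X₂)))
      exact this
    intro X
    set f : X ⟶ Injective.under X := Injective.ι X with hf
    set C : ShortComplex A := ShortComplex.mk f (cokernel.π f) (cokernel.condition f) with hCdef
    have hC : C.ShortExact :=
      { exact := ShortComplex.exact_of_g_is_cokernel _ (cokernelIsCokernel f)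
        mono_f := by dsimp [C]; infer_instance
        epi_g := by dsimp [C]; infer_instance }
    let R₁ := ComposableArrows.mk₃ (S.δ C hC i) ((S.F (i+1)).map C.f) ((S.F (i+1)).map C.g)
    let R₂ := ComposableArrows.mk₃ (T.δ C hC i) ((T.F (i+1)).map C.f) ((T.F (i+1)).map C.g)
    let ψ : R₁ ⟶ R₂ := ComposableArrows.homMk₃
      ((φ.app i).app C.X₃) ((φ.app (i+1)).app C.X₁)
      ((φ.app (i+1)).app C.X₂) ((φ.app (i+1)).app C.X₃)
      (φ.comm C hC i)
      ((φ.app (i+1)).naturality C.f)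
      ((φ.app (i+1)).naturality C.g)
    have hR₁ : R₁.Exact := exact₃_mk _ _ _ _ _ (S.exact₁ C hC i) (S.exact₂ C hC (i+1))
    have hR₂ : R₂.Exact := exact₃_mk _ _ _ _ _ (T.exact₁ C hC i) (T.exact₂ C hC (i+1))
    have hepi : Epi (ComposableArrows.app' ψ 1) := by
      apply Abelian.epi_of_epi_of_epi_of_mono ψ hR₁ hR₂
      · have := IH C.X₃; dsimp [ψ]; exact (inferInstanceAs (Epi ((φ.app i).app C.X₃)))
      · have := hinj (i+1) C.X₂ (by dsimp [C]; infer_instance); dsimp [ψ]; exact (inferInstanceAs (Epi ((φ.app (i+1)).app C.X₂)))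
      · exact hmono C.X₃
    have hm : Mono ((φ.app (i + 1)).app X) := hmono X
    have he : Epi ((φ.app (i + 1)).app X) := hepi
    exact isIso_of_mono_of_epi _
  -- conclude by induction
  intro i X
  rcases lt_or_ge i 0 with hi | hi
  · exact hneg i hi X
  · exact Int.le_induction (motive := fun j _ => ∀ X : A, IsIso ((φ.app j).app X))
      (hneg (-1) (by omega)) (fun n _ ih => step n ih) i (by omega) X
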